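/- For all real numbers a > 0 and b, the integral over the real line ∫_{-∞}^{∞} y · Φ((y + b)/a) · φ(y) dy equals φ(b/√(a² + 1)) / √(a² + 1). -/

import Mathlib

open MeasureTheory Real

/-- Standard normal density. -/
noncomputable def stdNormalPdf (x : ℝ) : ℝ := Real.exp (-x ^ 2 / 2) / Real.sqrt (2 * Real.pi)

/-- Standard normal CDF. -/
noncomputable def stdNormalCdf (x : ℝ) : ℝ := ∫ t in Set.Iic x, stdNormalPdf t



lemma pdf_eq : stdNormalPdf = fun x => Real.exp (-(1/2) * x ^ 2) / Real.sqrt (2 * Real.pi) := by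
  funext x; unfold stdNormalPdf; ring_nf

lemma pdf_nonneg (x : ℝ) : 0 ≤ stdNormalPdf x :=
  div_nonneg (Real.exp_nonneg _) (Real.sqrt_nonneg _)

lemma pdf_le (x : ℝ) : stdNormalPdf x ≤ 1 / Real.sqrt (2 * Real.pi) := by
  unfold stdNormalPdf
  have h1 : Real.exp (-x ^ 2 / 2) ≤ 1 := Real.exp_le_one_iff.2 (by nlinarith [sq_nonneg x])
  gcongr

lemma pdf_continuous : Continuous stdNormalPdf := by
  unfold stdNormalPdf; fun_prop

lemma pdf_integrable : Integrable stdNormalPdf := by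
  rw [pdf_eq]
  exact (integrable_exp_neg_mul_sq (by norm_num)).div_const _

lemma pdf_integral : ∫ x, stdNormalPdf x = 1 := by
  rw [pdf_eq]
  rw [integral_div, integral_gaussian]
  rw [show (π / (1/2)) = 2 * π by ring]
  rw [div_self]
  positivity

lemma abs_mul_pdf_integrable : Integrable (fun x => |x| * stdNormalPdf x) := by
  have h := (integrable_mul_exp_neg_mul_sq (by norm_num : (0:ℝ) < 1/2)).abs.div_const
    (Real.sqrt (2 * Real.pi))
  refine h.congr (Filter.Eventually.of_forall fun x => ?_)
  rw [pdf_eq]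
  simp [abs_mul, abs_of_nonneg (Real.exp_nonneg _), mul_div_assoc]

lemma hasDerivAt_pdf (x : ℝ) :
    HasDerivAt stdNormalPdf (-(x * stdNormalPdf x)) x := by
  have h1 : HasDerivAt (fun y : ℝ => -y ^ 2 / 2) (-x) x := by
    have := ((hasDerivAt_pow 2 x).neg.div_const 2)
    refine this.congr_deriv ?_
    push_cast; ring
  have h2 := (h1.exp).div_const (Real.sqrt (2 * Real.pi))
  refine h2.congr_deriv ?_
  unfold stdNormalPdf; ring

lemma hasDerivAt_cdf (x : ℝ) :
    HasDerivAt stdNormalCdf (stdNormalPdf x) x := by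
  have key : stdNormalCdf = fun u => stdNormalCdf 0 + ∫ t in (0:ℝ)..u, stdNormalPdf t := by
    funext u
    have := intervalIntegral.integral_Iic_sub_Iic (f := stdNormalPdf) (μ := volume)
      pdf_integrable.integrableOn pdf_integrable.integrableOn (a := 0) (b := u)
    unfold stdNormalCdf
    unfold stdNormalCdf at this
    linarith
  rw [key]
  exact (intervalIntegral.integral_hasDerivAt_right
    pdf_integrable.intervalIntegrable
    pdf_continuous.stronglyMeasurable.stronglyMeasurableAtFilter
    pdf_continuous.continuousAt).const_add _

lemma cdf_nonneg (x : ℝ) : 0 ≤ stdNormalCdf x :=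
  setIntegral_nonneg measurableSet_Iic fun t _ => pdf_nonneg t

lemma cdf_le_one (x : ℝ) : stdNormalCdf x ≤ 1 := by
  rw [← pdf_integral]
  exact setIntegral_le_integral pdf_integrable (Filter.Eventually.of_forall pdf_nonneg)

lemma cdf_continuous : Continuous stdNormalCdf :=
  continuous_iff_continuousAt.2 fun x => (hasDerivAt_cdf x).continuousAt

lemma sq_tendsto_atBot : Filter.Tendsto (fun y : ℝ => y ^ 2) Filter.atBot Filter.atTop := by
  have := (Filter.tendsto_pow_atTop (two_ne_zero)).comp
    (Filter.tendsto_neg_atBot_atTop (G := ℝ))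
  refine this.congr fun y => ?_
  simp [Function.comp]

lemma pdf_tendsto (l : Filter ℝ) (hl : Filter.Tendsto (fun y : ℝ => y ^ 2) l Filter.atTop) :
    Filter.Tendsto stdNormalPdf l (nhds 0) := by
  have h : Filter.Tendsto (fun y : ℝ => -y ^ 2 / 2) l Filter.atBot := by
    apply Filter.Tendsto.atBot_div_const two_pos
    exact Filter.tendsto_neg_atTop_atBot.comp hl
  have h2 := (Real.tendsto_exp_atBot.comp h).div_const (Real.sqrt (2 * Real.pi))
  rw [zero_div] at h2
  exact h2

lemma pdf_tendsto_atTop : Filter.Tendsto stdNormalPdf Filter.atTop (nhds 0) :=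
  pdf_tendsto _ (Filter.tendsto_pow_atTop two_ne_zero)

lemma pdf_tendsto_atBot : Filter.Tendsto stdNormalPdf Filter.atBot (nhds 0) :=
  pdf_tendsto _ sq_tendsto_atBot

theorem integral_id_mul_cdf_mul_pdf (a b : ℝ) (ha : 0 < a) :
    (∫ y : ℝ, y * stdNormalCdf ((y + b) / a) * stdNormalPdf y) =
      stdNormalPdf (b / Real.sqrt (a ^ 2 + 1)) / Real.sqrt (a ^ 2 + 1) := by
  have ha' : a ≠ 0 := ha.ne'
  have hc : (0:ℝ) < a ^ 2 + 1 := by positivity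
  have hs2pi : (0:ℝ) < Real.sqrt (2 * Real.pi) := Real.sqrt_pos.2 (by positivity)
  set g : ℝ → ℝ := fun y => (y + b) / a with hg
  set t1 : ℝ → ℝ := fun y => y * stdNormalCdf (g y) * stdNormalPdf y with ht1
  set t2 : ℝ → ℝ := fun y => stdNormalPdf y * stdNormalPdf (g y) / a with ht2
  set F : ℝ → ℝ := fun y => -(stdNormalPdf y * stdNormalCdf (g y)) with hF
  -- derivative
  have hderiv : ∀ y, HasDerivAt F (t1 y - t2 y) y := by
    intro y
    have hgy : HasDerivAt g (1 / a) y := by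
      simpa using ((hasDerivAt_id y).add_const b).div_const a
    have hΦ : HasDerivAt (fun y => stdNormalCdf (g y)) (stdNormalPdf (g y) * (1 / a)) y :=
      (hasDerivAt_cdf (g y)).comp y hgy
    have hprod := ((hasDerivAt_pdf y).mul hΦ).neg
    refine hprod.congr_deriv ?_
    simp only [ht1, ht2]
    field_simp
    ring
  -- integrability
  have hg_cont : Continuous g := by fun_prop
  have hInt1 : Integrable t1 := by
    refine abs_mul_pdf_integrable.mono' ?_ (Filter.Eventually.of_forall fun y => ?_)
    · exact ((continuous_id.mul (cdf_continuous.comp hg_cont)).mul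
        pdf_continuous).aestronglyMeasurable
    · have h1 : |stdNormalCdf (g y)| ≤ 1 :=
        abs_le.2 ⟨by linarith [cdf_nonneg (g y)], cdf_le_one (g y)⟩
      have h2 : (0:ℝ) ≤ stdNormalPdf y := pdf_nonneg y
      calc ‖t1 y‖ = |y| * |stdNormalCdf (g y)| * stdNormalPdf y := by
            simp only [ht1, norm_mul, Real.norm_eq_abs, abs_of_nonneg h2]
        _ ≤ |y| * 1 * stdNormalPdf y := by gcongr
        _ = |y| * stdNormalPdf y := by ring
  have hInt2 : Integrable t2 := by
    refine (pdf_integrable.mul_const ((1 / Real.sqrt (2 * Real.pi)) / a)).mono'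
      ?_ (Filter.Eventually.of_forall fun y => ?_)
    · exact ((pdf_continuous.mul (pdf_continuous.comp hg_cont)).div_const a).aestronglyMeasurable
    · have h2 : (0:ℝ) ≤ stdNormalPdf y := pdf_nonneg y
      have h3 : (0:ℝ) ≤ stdNormalPdf (g y) := pdf_nonneg (g y)
      have hn : ‖t2 y‖ = stdNormalPdf y * stdNormalPdf (g y) / a := by
        simp only [ht2, Real.norm_eq_abs,
          abs_of_nonneg (div_nonneg (mul_nonneg h2 h3) ha.le)]
      rw [hn, div_le_iff₀ ha]
      have h4 : stdNormalPdf y * stdNormalPdf (g y)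
          ≤ stdNormalPdf y * (1 / Real.sqrt (2 * Real.pi)) :=
        mul_le_mul_of_nonneg_left (pdf_le _) h2
      have h5 : stdNormalPdf y * (1 / Real.sqrt (2 * Real.pi) / a) * a
          = stdNormalPdf y * (1 / Real.sqrt (2 * Real.pi)) := by field_simp
      rw [h5]; exact h4
  -- limits
  have hbound : ∀ y, ‖F y‖ ≤ stdNormalPdf y := by
    intro y
    have h1 : |stdNormalCdf (g y)| ≤ 1 :=
      abs_le.2 ⟨by linarith [cdf_nonneg (g y)], cdf_le_one (g y)⟩
    have h2 := pdf_nonneg y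
    calc ‖F y‖ = stdNormalPdf y * |stdNormalCdf (g y)| := by
          simp only [hF, norm_neg, norm_mul, Real.norm_eq_abs, abs_of_nonneg h2]
      _ ≤ stdNormalPdf y * 1 := by gcongr
      _ = stdNormalPdf y := mul_one _
  have htop : Filter.Tendsto F Filter.atTop (nhds 0) :=
    squeeze_zero_norm hbound pdf_tendsto_atTop
  have hbot : Filter.Tendsto F Filter.atBot (nhds 0) :=
    squeeze_zero_norm hbound pdf_tendsto_atBot
  -- FTC
  have hzero : ∫ y, (t1 y - t2 y) = 0 := by
    rw [integral_of_hasDerivAt_of_tendsto hderiv (hInt1.sub hInt2) hbot htop]; ring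
  rw [integral_sub hInt1 hInt2, sub_eq_zero] at hzero
  have hLHS : (∫ y : ℝ, y * stdNormalCdf ((y + b) / a) * stdNormalPdf y) = ∫ y, t2 y := hzero
  rw [hLHS]
  -- Gaussian computation
  set k : ℝ := (a ^ 2 + 1) / (2 * a ^ 2) with hk
  have hkpos : 0 < k := by positivity
  set d : ℝ := b / (a ^ 2 + 1) with hd
  set e : ℝ := -b ^ 2 / (2 * (a ^ 2 + 1)) with he
  have hpt : ∀ y, t2 y = Real.exp (-k * (y + d) ^ 2) * (Real.exp e / (2 * Real.pi * a)) := by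
    intro y
    have hsq : Real.sqrt (2 * Real.pi) * Real.sqrt (2 * Real.pi) = 2 * Real.pi :=
      Real.mul_self_sqrt (by positivity)
    simp only [ht2, stdNormalPdf, hg]
    rw [div_mul_div_comm, hsq, ← Real.exp_add]
    rw [div_div, ← mul_div_assoc, ← Real.exp_add]
    congr 2
    rw [hk, hd, he]
    field_simp
    ring
  simp only [hpt]
  rw [integral_mul_const]
  have htrans : (∫ y : ℝ, Real.exp (-k * (y + d) ^ 2)) = Real.sqrt (π / k) := by
    rw [show (fun y : ℝ => Real.exp (-k * (y + d) ^ 2))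
        = (fun z : ℝ => Real.exp (-k * z ^ 2)) ∘ (fun y => y + d) from rfl]
    rw [Function.comp_def, integral_add_right_eq_self (fun z : ℝ => Real.exp (-k * z ^ 2)) d]
    exact integral_gaussian k
  rw [htrans]
  -- final algebra
  have hsqrtc : Real.sqrt (a ^ 2 + 1) > 0 := Real.sqrt_pos.2 hc
  have hsqc : Real.sqrt (a ^ 2 + 1) ^ 2 = a ^ 2 + 1 := Real.sq_sqrt hc.le
  have hπk : π / k = 2 * π * a ^ 2 / (a ^ 2 + 1) := by
    rw [hk]; field_simp
  have hsπk : Real.sqrt (π / k) = Real.sqrt (2 * π) * a / Real.sqrt (a ^ 2 + 1) := by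
    rw [hπk, Real.sqrt_div (by positivity), Real.sqrt_mul (by positivity),
      Real.sqrt_sq ha.le]
  rw [hsπk]
  unfold stdNormalPdf
  have hexp : -(b / Real.sqrt (a ^ 2 + 1)) ^ 2 / 2 = e := by
    rw [div_pow, hsqc, he]; field_simp
  rw [hexp]
  have hsq : Real.sqrt (2 * Real.pi) * Real.sqrt (2 * Real.pi) = 2 * Real.pi :=
    Real.mul_self_sqrt (by positivity)
  rw [← hsq]
  field_simp
  ring
  rw [Real.sqrt_sq (Real.sqrt_nonneg _)]
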